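/- Let H be an ICC group, K a group, and γ, γ' : K → H group homomorphisms such that the image γ(K) is a subgroup of finite index in H. Let f : H → ℝ be a function with f(h) ≥ 0 for all h ∈ H, with ∑_{h ∈ H} f(h)² < ∞, with f not identically zero, and satisfying f(γ(g) h γ'(g)⁻¹) = f(h) for every g ∈ K and h ∈ H. Then the support {h ∈ H : f(h) ≠ 0} consists of exactly one element. -/

import Mathlib

open Subgroup

/-- Let `H` be an ICC group, `K` a group, `γ, γ' : K → H` homomorphisms
with `γ(K)` of finite index in `H`. Let `f : H → ℝ` be nonnegative, square-summable,
not identically zero, and satisfy `f (γ g * h * (γ' g)⁻¹) = f h` for all `g ∈ K`, `h ∈ H`.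
Then the support of `f` consists of exactly one element. -/
theorem icc_twisted_invariant_l2_function_support_singleton
    {H K : Type*} [Group H] [Group K]
    (hicc : ∀ h : H, h ≠ 1 → {x : H | ∃ y : H, x = y * h * y⁻¹}.Infinite)
    (γ γ' : K →* H) (hγ : γ.range.FiniteIndex)
    (f : H → ℝ) (hf0 : ∀ h : H, 0 ≤ f h)
    (hfsum : Summable fun h : H => (f h) ^ 2)
    (hfne : f ≠ 0)
    (hfinv : ∀ (g : K) (h : H), f (γ g * h * (γ' g)⁻¹) = f h) :
    ∃ h₀ : H, {h : H | f h ≠ 0} = {h₀} := by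
  classical
  obtain ⟨h₀, hh₀⟩ : ∃ h, f h ≠ 0 := by
    by_contra hc
    push_neg at hc
    exact hfne (funext fun h => hc h)
  -- level sets are finite
  have hlevel : ∀ h : H, f h ≠ 0 → {x : H | f h ^ 2 ≤ f x ^ 2}.Finite := by
    intro h hh
    have hpos : (0 : ℝ) < f h ^ 2 := by positivity
    have h2 : ∀ᶠ x in Filter.cofinite, f x ^ 2 < f h ^ 2 :=
      hfsum.tendsto_cofinite_zero.eventually (gt_mem_nhds hpos)
    have := Filter.eventually_cofinite.mp h2
    simpa [not_lt] using this
  -- the (twisted) stabilizer subgroups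
  set S : H → Subgroup K := fun h =>
    { carrier := {g : K | γ g * h * (γ' g)⁻¹ = h}
      one_mem' := by simp
      mul_mem' := by
        intro a b ha hb
        simp only [Set.mem_setOf_eq] at *
        have key : γ a * γ b * h * ((γ' b)⁻¹ * (γ' a)⁻¹)
            = γ a * (γ b * h * (γ' b)⁻¹) * (γ' a)⁻¹ := by group
        rw [map_mul, map_mul, mul_inv_rev, key, hb, ha]
      inv_mem' := by
        intro a ha
        simp only [Set.mem_setOf_eq] at *
        rw [map_inv, map_inv, inv_inv]
        conv_lhs => rw [← ha]
        group } with hS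
  have hSmem : ∀ (h : H) (g : K), g ∈ S h ↔ γ g * h * (γ' g)⁻¹ = h := fun _ _ => Iff.rfl
  -- quotients by stabilizers of support points are finite
  have hSfin : ∀ h : H, f h ≠ 0 → Finite (K ⧸ S h) := by
    intro h hh
    have hT := hlevel h hh
    haveI := hT.to_subtype
    have hmemlvl : ∀ g : K, γ g * h * (γ' g)⁻¹ ∈ {x : H | f h ^ 2 ≤ f x ^ 2} := by
      intro g
      show f h ^ 2 ≤ f (γ g * h * (γ' g)⁻¹) ^ 2
      rw [hfinv]
    have hwd : ∀ a b : K, QuotientGroup.leftRel (S h) a b →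
        (⟨γ a * h * (γ' a)⁻¹, hmemlvl a⟩ : {x : H | f h ^ 2 ≤ f x ^ 2})
          = ⟨γ b * h * (γ' b)⁻¹, hmemlvl b⟩ := by
      intro a b hab
      rw [QuotientGroup.leftRel_apply, hSmem] at hab
      apply Subtype.ext
      show γ a * h * (γ' a)⁻¹ = γ b * h * (γ' b)⁻¹
      simp only [map_mul, map_inv, mul_inv_rev, inv_inv] at hab
      calc γ a * h * (γ' a)⁻¹
          = γ a * ((γ a)⁻¹ * γ b * h * ((γ' b)⁻¹ * γ' a)) * (γ' a)⁻¹ := by rw [hab]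
        _ = γ b * h * (γ' b)⁻¹ := by group
    let F : K ⧸ S h → {x : H | f h ^ 2 ≤ f x ^ 2} := fun q =>
      Quotient.liftOn' q (fun g => ⟨γ g * h * (γ' g)⁻¹, hmemlvl g⟩) hwd
    have hFinj : Function.Injective F := by
      intro q₁ q₂
      induction q₁ using Quotient.inductionOn'
      induction q₂ using Quotient.inductionOn'
      rename_i a b
      intro hab
      have hab' : γ a * h * (γ' a)⁻¹ = γ b * h * (γ' b)⁻¹ := congrArg Subtype.val hab
      apply Quotient.sound'
      rw [QuotientGroup.leftRel_apply, hSmem]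
      simp only [map_mul, map_inv, mul_inv_rev, inv_inv]
      calc (γ a)⁻¹ * γ b * h * ((γ' b)⁻¹ * γ' a)
          = (γ a)⁻¹ * (γ b * h * (γ' b)⁻¹) * γ' a := by group
        _ = (γ a)⁻¹ * (γ a * h * (γ' a)⁻¹) * γ' a := by rw [hab']
        _ = h := by group
    exact Finite.of_injective F hFinj
  refine ⟨h₀, ?_⟩
  ext h₁
  simp only [Set.mem_setOf_eq, Set.mem_singleton_iff]
  constructor
  · intro hh₁
    -- the intersection of the two stabilizers
    haveI := hSfin h₀ hh₀
    haveI := hSfin h₁ hh₁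
    haveI : (S h₀).FiniteIndex := Subgroup.finiteIndex_of_finite_quotient
    haveI : (S h₁).FiniteIndex := Subgroup.finiteIndex_of_finite_quotient
    set K₂ : Subgroup K := S h₀ ⊓ S h₁ with hK₂
    haveI : K₂.FiniteIndex := inferInstance
    set c : H := h₁ * h₀⁻¹ with hc
    -- γ(K₂) centralizes c
    have hcomm : ∀ g ∈ K₂, c * γ g = γ g * c := by
      intro g hg
      obtain ⟨hg0', hg1'⟩ := Subgroup.mem_inf.mp hg
      have hg0 : γ g * h₀ * (γ' g)⁻¹ = h₀ := (hSmem h₀ g).mp hg0'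
      have hg1 : γ g * h₁ * (γ' g)⁻¹ = h₁ := (hSmem h₁ g).mp hg1'
      have e0 : γ g * h₀ = h₀ * γ' g := by
        have := congrArg (fun x => x * γ' g) hg0
        simpa using this
      have e1 : γ g * h₁ = h₁ * γ' g := by
        have := congrArg (fun x => x * γ' g) hg1
        simpa using this
      have e0r : γ g = h₀ * γ' g * h₀⁻¹ := by
        rw [← e0]; group
      calc h₁ * h₀⁻¹ * γ g = h₁ * h₀⁻¹ * (h₀ * γ' g * h₀⁻¹) := by rw [← e0r]
        _ = h₁ * γ' g * h₀⁻¹ := by group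
        _ = γ g * h₁ * h₀⁻¹ := by rw [e1]
        _ = γ g * (h₁ * h₀⁻¹) := by group
    have hle : Subgroup.map γ K₂ ≤ Subgroup.centralizer {c} := by
      rintro x ⟨g, hg, rfl⟩
      rw [Subgroup.mem_centralizer_iff]
      rintro y rfl
      exact hcomm g hg
    -- γ(K₂) has finite index in H
    haveI : (Subgroup.map γ K₂).FiniteIndex := by
      constructor
      have hsub : Subgroup.map γ K₂ ≤ γ.range := by
        rw [MonoidHom.range_eq_map]
        exact Subgroup.map_mono le_top
      rw [← Subgroup.relIndex_mul_index hsub]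
      apply mul_ne_zero
      · haveI : (Subgroup.comap γ (Subgroup.map γ K₂)).FiniteIndex :=
          Subgroup.finiteIndex_of_le (H := K₂) (Subgroup.le_comap_map (f := γ) K₂)
        rw [MonoidHom.range_eq_map, ← Subgroup.relIndex_comap, Subgroup.relIndex_top_right]
        exact this.index_ne_zero
      · exact hγ.index_ne_zero
    haveI : (Subgroup.centralizer {c}).FiniteIndex :=
      Subgroup.finiteIndex_of_le hle
    -- the conjugacy class of c is finite
    haveI : Finite (H ⧸ Subgroup.centralizer {c}) := inferInstance
    have hwd2 : ∀ a b : H, QuotientGroup.leftRel (Subgroup.centralizer {c}) a b →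
        a * c * a⁻¹ = b * c * b⁻¹ := by
      intro a b hab
      rw [QuotientGroup.leftRel_apply] at hab
      have := Subgroup.mem_centralizer_iff.mp hab c rfl
      have hb : b = a * (a⁻¹ * b) := by group
      rw [hb, show a * (a⁻¹ * b) * c * (a * (a⁻¹ * b))⁻¹
          = a * ((a⁻¹ * b) * c * (a⁻¹ * b)⁻¹) * a⁻¹ from by group]
      congr 1
      congr 1
      rw [← this]
      group
    let Φ : H ⧸ Subgroup.centralizer {c} → H := fun q =>
      Quotient.liftOn' q (fun y => y * c * y⁻¹) hwd2
    have hclass : {x : H | ∃ y : H, x = y * c * y⁻¹}.Finite := by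
      apply (Set.finite_range Φ).subset
      rintro x ⟨y, rfl⟩
      exact ⟨Quotient.mk'' y, rfl⟩
    have hc1 : c = 1 := by
      by_contra hne
      exact hicc c hne hclass
    rw [hc] at hc1
    exact mul_inv_eq_one.mp hc1
  · rintro rfl; exact hh₀
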